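/- If S is a row-stochastic matrix obtained by row-wise softmax of W and σ is a permutation with permutation matrix P, then softmax(W · Pᵀ) · P · Z = softmax(W) · Z for any matrix Z. (Column-permuted attention weights applied to row-permuted features give the same output.) -/

import Mathlib

open Matrix

theorem softmax_perm_cancel {N' N d : ℕ} (W : Matrix (Fin N') (Fin N) ℝ)
    (Z : Matrix (Fin N) (Fin d) ℝ) (σ : Equiv.Perm (Fin N)) :
    let softmax : Matrix (Fin N') (Fin N) ℝ → Matrix (Fin N') (Fin N) ℝ :=
      fun M => Matrix.of fun i j => Real.exp (M i j) / ∑ k, Real.exp (M i k)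
    let P : Matrix (Fin N) (Fin N) ℝ := σ.permMatrix ℝ
    softmax (W * Pᵀ) * P * Z = softmax W * Z := by
  intro softmax P
  have key : softmax (W * Pᵀ) * P = softmax W := by
    ext i j
    have hW : ∀ k, (W * Pᵀ) i k = W i (σ k) := by
      intro k
      simp [P, mul_apply, Equiv.Perm.permMatrix, PEquiv.toMatrix_apply, Equiv.toPEquiv_apply,
        Equiv.symm_apply_eq]
    have hsum : ∑ k, Real.exp ((W * Pᵀ) i k) = ∑ k, Real.exp (W i k) :=
      Fintype.sum_equiv σ _ _ (fun k => by rw [hW])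
    have hS : ∀ k, softmax (W * Pᵀ) i k
        = Real.exp (W i (σ k)) / ∑ m, Real.exp (W i m) := fun k => by
      show Real.exp ((W * Pᵀ) i k) / ∑ m, Real.exp ((W * Pᵀ) i m) = _
      rw [hW, hsum]
    rw [mul_apply]
    simp only [hS, P, Equiv.Perm.permMatrix, PEquiv.toMatrix_apply,
      Equiv.toPEquiv_apply, Option.mem_def, Option.some_inj, mul_ite, mul_one, mul_zero,
      Equiv.apply_eq_iff_eq_symm_apply]
    rw [Finset.sum_ite_eq' Finset.univ (σ.symm j)]
    simp [softmax]
  rw [key]
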